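/- Let ϕ : (0,∞) → (0,∞) be strictly decreasing with lim_{t→0⁺} ϕ(t) = ∞ and lim_{t→∞} ϕ(t) = 0, and let c > 0. If {Q_i}_{i=1}^∞ ⊆ 𝒦₀ⁿ is a sequence of convex bodies with Ṽ_ϕ(Q_i) = c for all i, then there exists a constant R > 0 such that Q_i* ⊆ R·B₂ⁿ for all i, where Q_i* is the polar body of Q_i and B₂ⁿ is the Euclidean unit ball. -/

import Mathlib

open MeasureTheory Metric Set Filter
open scoped ENNReal NNReal Topology RealInnerProductSpace

noncomputable section

/-- The unit sphere `S^{n-1}` in `ℝⁿ`. -/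
def unitSphere (n : ℕ) : Set (EuclideanSpace ℝ (Fin n)) :=
  Metric.sphere (0 : EuclideanSpace ℝ (Fin n)) 1

/-- The spherical Lebesgue (Hausdorff) measure on `S^{n-1}`, i.e. the
`(n-1)`-dimensional Hausdorff measure restricted to the unit sphere. -/
def sphMeasure (n : ℕ) : Measure (EuclideanSpace ℝ (Fin n)) :=
  (μH[(n : ℝ) - 1] : Measure (EuclideanSpace ℝ (Fin n))).restrict (unitSphere n)

/-- `K` is a convex body in `ℝⁿ` with the origin in its interior
(`K ∈ 𝒦₀ⁿ`). -/
def IsConvexBody0 {n : ℕ} (K : Set (EuclideanSpace ℝ (Fin n))) : Prop :=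
  IsCompact K ∧ Convex ℝ K ∧ (0 : EuclideanSpace ℝ (Fin n)) ∈ interior K

/-- The radial function `ρ_K(u) = max {r > 0 : r • u ∈ K}`. -/
def radialFn {n : ℕ} (K : Set (EuclideanSpace ℝ (Fin n))) (u : EuclideanSpace ℝ (Fin n)) : ℝ :=
  sSup {r : ℝ | 0 < r ∧ r • u ∈ K}

/-- The support function `h_K(u) = max {x·u : x ∈ K}`. -/
def suppFn {n : ℕ} (K : Set (EuclideanSpace ℝ (Fin n))) (u : EuclideanSpace ℝ (Fin n)) : ℝ :=
  sSup ((fun x => ⟪x, u⟫) '' K)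

/-- The reverse radial Gauss image `α*_K(η)`: unit vectors `x/‖x‖` over boundary
points `x ∈ ∂K` lying on a supporting hyperplane of `K` with outer normal in `η`. -/
def revGauss {n : ℕ} (K η : Set (EuclideanSpace ℝ (Fin n))) :
    Set (EuclideanSpace ℝ (Fin n)) :=
  {v | ∃ x ∈ frontier K, (∃ u ∈ η, ⟪x, u⟫ = suppFn K u) ∧ v = ‖x‖⁻¹ • x}

/-- The dual Orlicz curvature `C̃_φ(K,η) = (1/n) ∫_{α*_K(η)} φ(ρ_K(u)) du`,
as a set function. -/
def dualCurv {n : ℕ} (φ : ℝ → ℝ) (K η : Set (EuclideanSpace ℝ (Fin n))) : ℝ :=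
  (n : ℝ)⁻¹ * ∫ u in revGauss K η, φ (radialFn K u) ∂(sphMeasure n)

/-- The dual Orlicz quermassintegral `Ṽ_ϕ(K) = (1/n) ∫_{S^{n-1}} ϕ(ρ_K(u)) du`. -/
def dualQuerm {n : ℕ} (ϕ : ℝ → ℝ) (K : Set (EuclideanSpace ℝ (Fin n))) : ℝ :=
  (n : ℝ)⁻¹ * ∫ u, ϕ (radialFn K u) ∂(sphMeasure n)

/-- `μ` is not concentrated in any closed hemisphere. -/
def NotConcentrated {n : ℕ} (μ : Measure (EuclideanSpace ℝ (Fin n))) : Prop :=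
  ∀ ξ ∈ unitSphere n, 0 < ∫ θ, max ⟪ξ, θ⟫ 0 ∂μ

/-- Conditions A1)–A3): `ϕ : (0,∞) → (0,∞)` is strictly decreasing with
`ϕ(0⁺) = ∞`, `ϕ(∞) = 0`, differentiable with `ϕ' < 0`, and
`φ(t) = -ϕ'(t)·t` is (positive and) continuous on `(0,∞)`. -/
def CondA (ϕ φ : ℝ → ℝ) : Prop :=
  StrictAntiOn ϕ (Set.Ioi 0) ∧ (∀ t > (0 : ℝ), 0 < ϕ t) ∧
    Tendsto ϕ (𝓝[>] (0 : ℝ)) atTop ∧ Tendsto ϕ atTop (𝓝 (0 : ℝ)) ∧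
    (∀ t > (0 : ℝ), HasDerivAt ϕ (-(φ t) / t) t) ∧
    (∀ t > (0 : ℝ), 0 < φ t) ∧ ContinuousOn φ (Set.Ioi 0)

/-- Conditions B1)–B3): `ϕ : (0,∞) → (0,∞)` is strictly increasing with
`ϕ(0⁺) = 0`, `ϕ(∞) = ∞`, differentiable with `ϕ' > 0`, and
`φ(t) = ϕ'(t)·t` is (positive and) continuous on `(0,∞)`. -/
def CondB (ϕ φ : ℝ → ℝ) : Prop :=
  StrictMonoOn ϕ (Set.Ioi 0) ∧ (∀ t > (0 : ℝ), 0 < ϕ t) ∧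
    Tendsto ϕ (𝓝[>] (0 : ℝ)) (𝓝 (0 : ℝ)) ∧ Tendsto ϕ atTop atTop ∧
    (∀ t > (0 : ℝ), HasDerivAt ϕ (φ t / t) t) ∧
    (∀ t > (0 : ℝ), 0 < φ t) ∧ ContinuousOn φ (Set.Ioi 0)

/-- The Wulff shape `[f] = ⋂_{u ∈ Ω} {x : x·u ≤ f(u)}`. -/
def wulff {n : ℕ} (Ω : Set (EuclideanSpace ℝ (Fin n))) (f : EuclideanSpace ℝ (Fin n) → ℝ) :
    Set (EuclideanSpace ℝ (Fin n)) :=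
  ⋂ u ∈ Ω, {x | ⟪x, u⟫ ≤ f u}

/-- The convex hull `⟨ρ⟩ = conv {ρ(u) u : u ∈ Ω}`. -/
def sphHull {n : ℕ} (Ω : Set (EuclideanSpace ℝ (Fin n))) (ρ : EuclideanSpace ℝ (Fin n) → ℝ) :
    Set (EuclideanSpace ℝ (Fin n)) :=
  convexHull ℝ ((fun u => ρ u • u) '' Ω)

/-- The set `∂′K` of boundary points of `K` having a unique outer unit normal. -/
def uniqNormalPts {n : ℕ} (K : Set (EuclideanSpace ℝ (Fin n))) :
    Set (EuclideanSpace ℝ (Fin n)) :=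
  {x | x ∈ frontier K ∧ ∃! v, v ∈ unitSphere n ∧ ⟪x, v⟫ = suppFn K v}

/-- The polar body `K* = {x : x·y ≤ 1 for all y ∈ K}`. -/
def polarBody {n : ℕ} (K : Set (EuclideanSpace ℝ (Fin n))) :
    Set (EuclideanSpace ℝ (Fin n)) :=
  {x | ∀ y ∈ K, ⟪x, y⟫ ≤ 1}

/-- `Ω` is a closed subset of `S^{n-1}` not contained in any closed hemisphere. -/
def GoodOmega {n : ℕ} (Ω : Set (EuclideanSpace ℝ (Fin n))) : Prop :=
  Ω ⊆ unitSphere n ∧ IsClosed Ω ∧ ∀ ξ ∈ unitSphere n, ∃ u ∈ Ω, ⟪ξ, u⟫ < 0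

section Aux

variable {n : ℕ}

/-- The spherical cap around `u` of "height" `1/2`. -/
def capSet (u : EuclideanSpace ℝ (Fin n)) : Set (EuclideanSpace ℝ (Fin n)) :=
  unitSphere n ∩ {v | 1/2 ≤ ⟪u, v⟫}

lemma capSet_isClosed (u : EuclideanSpace ℝ (Fin n)) : IsClosed (capSet u) :=
  (Metric.isClosed_sphere).inter (isClosed_le continuous_const (Continuous.inner continuous_const continuous_id))

lemma capSet_subset (u : EuclideanSpace ℝ (Fin n)) : capSet u ⊆ unitSphere n :=
  Set.inter_subset_left

/-- Lower bound for the Hausdorff measure of a spherical cap, uniform in the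
direction `u`. -/
lemma cap_lb (hn : 0 < n) (u : EuclideanSpace ℝ (Fin n)) (hu : ‖u‖ = 1) :
    ENNReal.ofReal (((n : ℝ))⁻¹ ^ (n - 1)) ≤
      (μH[(n : ℝ) - 1] : Measure (EuclideanSpace ℝ (Fin n))) (capSet u) := by
  classical
  have hu0 : u ≠ 0 := by
    intro h; rw [h, norm_zero] at hu; norm_num at hu
  set W : Submodule ℝ (EuclideanSpace ℝ (Fin n)) := (ℝ ∙ u)ᗮ with hWdef
  have hm : Module.finrank ℝ W = n - 1 := by
    have h1 : Module.finrank ℝ (ℝ ∙ u) = 1 := finrank_span_singleton hu0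
    have h2 : Module.finrank ℝ (ℝ ∙ u) + Module.finrank ℝ W = n := by
      rw [hWdef]
      rw [Submodule.finrank_add_finrank_orthogonal
        (K := (ℝ ∙ u : Submodule ℝ (EuclideanSpace ℝ (Fin n))))]
      exact finrank_euclideanSpace_fin
    omega
  set b : OrthonormalBasis (Fin (n - 1)) ℝ W :=
    (stdOrthonormalBasis ℝ W).reindex (finCongr hm) with hb
  set P := Submodule.orthogonalProjectionOnto W with hP
  set F : EuclideanSpace ℝ (Fin n) → (Fin (n - 1) → ℝ) :=
    fun v => WithLp.equiv 2 (Fin (n - 1) → ℝ) (b.repr (P v)) with hF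
  have hFlip : LipschitzWith 1 F := by
    have h1 : LipschitzWith 1 (fun v : EuclideanSpace ℝ (Fin n) => (P v : W)) := by
      have := (P : EuclideanSpace ℝ (Fin n) →L[ℝ] W).lipschitz
      refine this.weaken ?_
      have hnorm : ‖(P : EuclideanSpace ℝ (Fin n) →L[ℝ] W)‖ ≤ 1 := Submodule.orthogonalProjectionOnto_norm_le W
      rw [← NNReal.coe_le_coe, coe_nnnorm]
      exact hnorm.trans (by norm_num)
    have h3 := (PiLp.lipschitzWith_ofLp 2 (fun _ : Fin (n - 1) => ℝ)).comp
      (b.repr.lipschitz.comp h1)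
    simpa [hF, Function.comp_def] using h3
  set r₀ : ℝ := (2 * (n : ℝ))⁻¹ with hr₀
  have hnpos : (0:ℝ) < n := by exact_mod_cast hn
  have hr₀pos : 0 < r₀ := by positivity
  have hmn : ((n - 1 : ℕ) : ℝ) ≤ (n : ℝ) := by
    exact_mod_cast Nat.sub_le n 1
  have himg : Metric.closedBall (0 : Fin (n - 1) → ℝ) r₀ ⊆ F '' capSet u := by
    intro z hz
    have hznorm : ‖z‖ ≤ r₀ := by rwa [Metric.mem_closedBall, dist_zero_right] at hz
    set y : EuclideanSpace ℝ (Fin (n - 1)) := (WithLp.equiv 2 (Fin (n - 1) → ℝ)).symm z with hy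
    have hy2 : ‖y‖ ^ 2 ≤ 3/4 := by
      have h1 : ‖y‖ ^ 2 = ∑ i, (z i) ^ 2 := by
        rw [EuclideanSpace.norm_eq, Real.sq_sqrt (by positivity)]
        refine Finset.sum_congr rfl fun i _ => ?_
        rw [hy, WithLp.equiv_symm_apply, PiLp.toLp_apply, Real.norm_eq_abs, sq_abs]
      have h2 : ∑ i, (z i) ^ 2 ≤ ((n - 1 : ℕ) : ℝ) * r₀ ^ 2 := by
        have hbd : ∀ i ∈ Finset.univ, (z i) ^ 2 ≤ r₀ ^ 2 := by
          intro i _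
          have h3 : |z i| ≤ r₀ := by
            calc |z i| = ‖z i‖ := (Real.norm_eq_abs _).symm
              _ ≤ ‖z‖ := norm_le_pi_norm z i
              _ ≤ r₀ := hznorm
          rw [← sq_abs]
          exact pow_le_pow_left₀ (abs_nonneg _) h3 2
        calc ∑ i, (z i) ^ 2 ≤ ∑ _i : Fin (n - 1), r₀ ^ 2 := Finset.sum_le_sum hbd
          _ = ((n - 1 : ℕ) : ℝ) * r₀ ^ 2 := by
              rw [Finset.sum_const, Finset.card_univ, Fintype.card_fin]; ring
      have h5 : ((n - 1 : ℕ) : ℝ) * r₀ ^ 2 ≤ 1/4 := by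
        have hn1 : (1:ℝ) ≤ n := by exact_mod_cast hn
        have hnr : (n:ℝ) * r₀ = 1/2 := by
          rw [hr₀]; rw [mul_inv]; rw [← mul_assoc]; rw [mul_comm (n:ℝ) 2⁻¹, mul_assoc]
          rw [mul_inv_cancel₀ (by linarith only [hn1] : (n:ℝ) ≠ 0)]
          norm_num
        have hr₀le : r₀ ≤ 1/2 := by
          nlinarith only [hnr, mul_nonneg hr₀pos.le (sub_nonneg.mpr hn1)]
        calc ((n - 1 : ℕ) : ℝ) * r₀ ^ 2 ≤ (n:ℝ) * r₀ ^ 2 :=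
              mul_le_mul_of_nonneg_right hmn (sq_nonneg r₀)
          _ = ((n:ℝ) * r₀) * r₀ := by ring
          _ = (1/2) * r₀ := by rw [hnr]
          _ ≤ (1/2) * (1/2) := by linarith only [hr₀le]
          _ ≤ 1/4 := by norm_num
      linarith only [h1, h2, h5]
    set w : W := b.repr.symm y with hw
    have hwy : ‖(w : EuclideanSpace ℝ (Fin n))‖ = ‖y‖ := by
      rw [hw, ← Submodule.coe_norm, LinearIsometryEquiv.norm_map]
    have hw2 : ‖(w : EuclideanSpace ℝ (Fin n))‖ ^ 2 ≤ 3/4 := by rw [hwy]; exact hy2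
    set t : ℝ := Real.sqrt (1 - ‖(w : EuclideanSpace ℝ (Fin n))‖ ^ 2) with htdef
    have ht2 : t ^ 2 = 1 - ‖(w : EuclideanSpace ℝ (Fin n))‖ ^ 2 :=
      Real.sq_sqrt (by linarith only [hw2])
    have ht : 1/2 ≤ t := by
      have h12 : (1/2 : ℝ) = Real.sqrt (1/4) := by
        rw [show (1/4 : ℝ) = (1/2)^2 by norm_num, Real.sqrt_sq (by norm_num)]
      rw [h12, htdef]
      exact Real.sqrt_le_sqrt (by linarith only [hw2])
    have htpos : 0 ≤ t := Real.sqrt_nonneg _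
    set v : EuclideanSpace ℝ (Fin n) := t • u + (w : EuclideanSpace ℝ (Fin n)) with hv
    have huw : ⟪u, (w : EuclideanSpace ℝ (Fin n))⟫ = 0 := by
      have hmem : (w : EuclideanSpace ℝ (Fin n)) ∈ (ℝ ∙ u)ᗮ := w.2
      exact (Submodule.mem_orthogonal _ _).mp hmem u (Submodule.mem_span_singleton_self u)
    have hv1 : ‖v‖ = 1 := by
      have hsq : ‖v‖ ^ 2 = 1 := by
        rw [hv, norm_add_sq_real, norm_smul, hu, real_inner_smul_left, huw]
        rw [Real.norm_eq_abs]
        have habs : (|t| * 1) ^ 2 = t ^ 2 := by rw [mul_one, sq_abs]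
        rw [habs, ht2]; ring
      nlinarith only [hsq, norm_nonneg v]
    have huv : ⟪u, v⟫ = t := by
      rw [hv, inner_add_right, real_inner_smul_right, huw, real_inner_self_eq_norm_sq, hu]
      ring
    have hcap : v ∈ capSet u := by
      constructor
      · simp only [unitSphere, Metric.mem_sphere, dist_zero_right]; exact hv1
      · rw [Set.mem_setOf_eq, huv]; exact ht
    refine ⟨v, hcap, ?_⟩
    have hPu : P u = 0 := by
      apply Submodule.orthogonalProjectionOnto_apply_of_mem_orthogonal
      rw [hWdef, Submodule.orthogonal_orthogonal]
      exact Submodule.mem_span_singleton_self u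
    have hPw : P (w : EuclideanSpace ℝ (Fin n)) = w :=
      Submodule.orthogonalProjectionOnto_mem_subspace_eq_self w
    have hPv : P v = w := by
      rw [hv, map_add, _root_.map_smul, hPu, hPw, smul_zero, zero_add]
    rw [hF]
    simp only [hPv, hw, LinearIsometryEquiv.apply_symm_apply, hy]
    simp
  -- measure chain
  have hd : (0:ℝ) ≤ (n : ℝ) - 1 := by
    have : (1:ℝ) ≤ n := by exact_mod_cast hn
    linarith
  have hcast : ((n - 1 : ℕ) : ℝ) = (n : ℝ) - 1 := by
    rw [Nat.cast_sub hn, Nat.cast_one]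
  have h2r : 2 * r₀ = (n : ℝ)⁻¹ := by rw [hr₀]; field_simp
  calc ENNReal.ofReal (((n : ℝ))⁻¹ ^ (n - 1))
      = volume (Metric.closedBall (0 : Fin (n - 1) → ℝ) r₀) := by
        rw [Real.volume_pi_closedBall _ hr₀pos.le, Fintype.card_fin, h2r]
    _ = (μH[(n : ℝ) - 1] : Measure (Fin (n - 1) → ℝ))
          (Metric.closedBall (0 : Fin (n - 1) → ℝ) r₀) := by
        have hpi := MeasureTheory.hausdorffMeasure_pi_real (ι := Fin (n - 1))
        rw [Fintype.card_fin] at hpi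
        rw [← hcast, hpi]
    _ ≤ (μH[(n : ℝ) - 1] : Measure (Fin (n - 1) → ℝ)) (F '' capSet u) := measure_mono himg
    _ ≤ (μH[(n : ℝ) - 1] : Measure (EuclideanSpace ℝ (Fin n))) (capSet u) := by
        have := hFlip.hausdorffMeasure_image_le hd (capSet u)
        simpa using this

end Aux

/-- **Step 1 in the proof of Theorem 5.1**. Let `ϕ : (0,∞) → (0,∞)` be strictly
decreasing with `ϕ(0⁺) = ∞` and `ϕ(∞) = 0`, and let `c > 0`. If `Q_i ∈ 𝒦₀ⁿ` satisfy
`Ṽ_ϕ(Q_i) = c` for all `i`, then there is `R > 0` with `Q_i* ⊆ R·B₂ⁿ` for all `i`. -/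
theorem polar_uniformly_bounded {n : ℕ} (hn : 0 < n) (ϕ : ℝ → ℝ)
    (hϕa : StrictAntiOn ϕ (Set.Ioi 0)) (hϕp : ∀ t > (0 : ℝ), 0 < ϕ t)
    (hϕ0 : Tendsto ϕ (𝓝[>] (0 : ℝ)) atTop) (hϕtop : Tendsto ϕ atTop (𝓝 (0 : ℝ)))
    (c : ℝ) (hc : 0 < c)
    (Q : ℕ → Set (EuclideanSpace ℝ (Fin n))) (hQ : ∀ i, IsConvexBody0 (Q i))
    (hV : ∀ i, dualQuerm ϕ (Q i) = c) :
    ∃ R > (0 : ℝ), ∀ i, polarBody (Q i) ⊆ Metric.closedBall (0 : EuclideanSpace ℝ (Fin n)) R := by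
  classical
  have hnR : (0:ℝ) < n := by exact_mod_cast hn
  set ν : ℝ := ((n : ℝ))⁻¹ ^ (n - 1) with hν
  have hνpos : 0 < ν := by positivity
  set B : ℝ := (n * c) / ν with hB
  have hev : ∀ᶠ t in 𝓝[>] (0:ℝ), B < ϕ t := hϕ0.eventually (eventually_gt_atTop B)
  obtain ⟨t₀, ht₀pos, ht₀⟩ : ∃ t₀ > (0:ℝ), ∀ t, 0 < t → t < t₀ → B < ϕ t := by
    rw [eventually_nhdsWithin_iff, Metric.eventually_nhds_iff] at hev
    obtain ⟨ε, hε, h⟩ := hev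
    exact ⟨ε, hε, fun t ht1 ht2 =>
      h (by rw [Real.dist_eq, sub_zero, abs_of_pos ht1]; exact ht2) ht1⟩
  refine ⟨2 / t₀ + 1, by positivity, fun i => ?_⟩
  intro x hx
  rw [Metric.mem_closedBall, dist_zero_right]
  by_contra hxn
  push_neg at hxn
  have hxpos : 0 < ‖x‖ := lt_trans (by positivity) hxn
  set u := ‖x‖⁻¹ • x with hu
  have hunorm : ‖u‖ = 1 := by
    rw [hu, norm_smul, norm_inv, norm_norm, inv_mul_cancel₀ hxpos.ne']
  set δ := ‖x‖⁻¹ with hδ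
  have hδpos : 0 < δ := by positivity
  have hhalf : ∀ y ∈ Q i, ⟪u, y⟫ ≤ δ := by
    intro y hy
    rw [hu, real_inner_smul_left]
    calc ‖x‖⁻¹ * ⟪x, y⟫ ≤ ‖x‖⁻¹ * 1 :=
          mul_le_mul_of_nonneg_left (hx y hy) (by positivity)
      _ = δ := by rw [hδ, mul_one]
  -- the key integral estimate
  have hϕ2δpos : 0 < ϕ (2*δ) := hϕp _ (by positivity)
  have hkey : ϕ (2*δ) * ν ≤ n * c := by
    set f : EuclideanSpace ℝ (Fin n) → ℝ := fun v => ϕ (radialFn (Q i) v) with hf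
    have hint : ∫ v, f v ∂(sphMeasure n) = n * c := by
      have h := hV i
      rw [dualQuerm] at h
      have h2 : (n:ℝ) * ((n : ℝ)⁻¹ * ∫ v, f v ∂(sphMeasure n)) = (n:ℝ) * c := by rw [h]
      rw [← mul_assoc, mul_inv_cancel₀ hnR.ne', one_mul] at h2
      exact h2
    have hIntg : Integrable f (sphMeasure n) := by
      by_contra hni
      rw [MeasureTheory.integral_undef hni] at hint
      nlinarith only [hint, hc, hnR]
    obtain ⟨hQc, hQconv, hQ0⟩ := hQ i
    obtain ⟨ε, hεpos, hball⟩ : ∃ ε > (0:ℝ), Metric.ball 0 ε ⊆ Q i :=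
      Metric.mem_nhds_iff.mp (mem_interior_iff_mem_nhds.mp hQ0)
    obtain ⟨M, hM⟩ := hQc.isBounded.subset_closedBall 0
    have hρpos : ∀ v : EuclideanSpace ℝ (Fin n), ‖v‖ = 1 → ε/2 ≤ radialFn (Q i) v := by
      intro v hv
      apply le_csSup
      · refine ⟨M, fun r hr => ?_⟩
        have h1 : ‖r • v‖ ≤ M := by
          have := hM hr.2
          rwa [Metric.mem_closedBall, dist_zero_right] at this
        rw [norm_smul, hv, mul_one, Real.norm_eq_abs] at h1
        exact le_trans (le_abs_self r) h1
      · refine ⟨by positivity, hball ?_⟩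
        rw [mem_ball_zero_iff, norm_smul, hv, mul_one, Real.norm_eq_abs,
          abs_of_pos (by positivity)]
        linarith only [hεpos]
    have hρub : ∀ v : EuclideanSpace ℝ (Fin n), ‖v‖ = 1 → 1/2 ≤ ⟪u, v⟫ →
        radialFn (Q i) v ≤ 2*δ := by
      intro v hv hcapv
      apply Real.sSup_le
      · rintro r ⟨hr, hrQ⟩
        have h1 := hhalf _ hrQ
        rw [real_inner_smul_right] at h1
        have h2 : r * (1/2) ≤ r * ⟪u, v⟫ := mul_le_mul_of_nonneg_left hcapv hr.le
        linarith only [h1, h2]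
      · positivity
    have hcapm : MeasurableSet (capSet u) := (capSet_isClosed u).measurableSet
    have hsphm : MeasurableSet (unitSphere n) :=
      (Metric.isClosed_sphere : IsClosed (Metric.sphere (0 : EuclideanSpace ℝ (Fin n)) 1)).measurableSet
    have hmemae : ∀ᵐ v ∂(sphMeasure n), v ∈ unitSphere n := by
      unfold sphMeasure
      exact ae_restrict_mem hsphm
    have hfnn : 0 ≤ᵐ[sphMeasure n] f := by
      filter_upwards [hmemae] with v hv
      have hv1 : ‖v‖ = 1 := by rwa [unitSphere, mem_sphere_zero_iff_norm] at hv
      exact (hϕp _ (lt_of_lt_of_le (by positivity) (hρpos v hv1))).le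
    have hlin : ENNReal.ofReal (ϕ (2*δ)) * (sphMeasure n) (capSet u) ≤ ENNReal.ofReal (n*c) := by
      calc ENNReal.ofReal (ϕ (2*δ)) * (sphMeasure n) (capSet u)
          = ∫⁻ _ in capSet u, ENNReal.ofReal (ϕ (2*δ)) ∂(sphMeasure n) := by
            rw [setLIntegral_const]
        _ ≤ ∫⁻ v in capSet u, ENNReal.ofReal (f v) ∂(sphMeasure n) := by
            apply lintegral_mono_ae
            filter_upwards [ae_restrict_mem hcapm] with v hv
            apply ENNReal.ofReal_le_ofReal
            have hv1 : ‖v‖ = 1 := by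
              have := hv.1
              rwa [unitSphere, mem_sphere_zero_iff_norm] at this
            have hle := hρub v hv1 hv.2
            have hgt : 0 < radialFn (Q i) v :=
              lt_of_lt_of_le (by positivity) (hρpos v hv1)
            exact hϕa.antitoneOn (Set.mem_Ioi.mpr hgt)
              (Set.mem_Ioi.mpr (by positivity : (0:ℝ) < 2*δ)) hle
        _ ≤ ∫⁻ v, ENNReal.ofReal (f v) ∂(sphMeasure n) := setLIntegral_le_lintegral _ _
        _ = ENNReal.ofReal (∫ v, f v ∂(sphMeasure n)) :=
            (ofReal_integral_eq_lintegral_ofReal hIntg hfnn).symm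
        _ = ENNReal.ofReal (n*c) := by rw [hint]
    have hcaplb : ENNReal.ofReal ν ≤ (sphMeasure n) (capSet u) := by
      have h2 : (sphMeasure n) (capSet u)
          = (μH[(n:ℝ)-1] : Measure (EuclideanSpace ℝ (Fin n))) (capSet u) := by
        unfold sphMeasure
        rw [Measure.restrict_apply hcapm]
        congr 1
        exact Set.inter_eq_left.mpr (capSet_subset u)
      rw [h2, hν]
      exact cap_lb hn u hunorm
    have hfin : ENNReal.ofReal (ϕ (2*δ) * ν) ≤ ENNReal.ofReal (n*c) := by
      rw [ENNReal.ofReal_mul hϕ2δpos.le]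
      exact le_trans (mul_le_mul_right hcaplb _) hlin
    exact (ENNReal.ofReal_le_ofReal_iff (by positivity)).mp hfin
  -- conclude the contradiction
  have h2δ : 2*δ < t₀ := by
    have h1 : (0:ℝ) < 2 / t₀ := by positivity
    have h2 : 2 / t₀ < ‖x‖ := by linarith only [hxn]
    have h3 : δ < (2 / t₀)⁻¹ := by
      rw [hδ]
      exact inv_strictAnti₀ h1 h2
    rw [inv_div] at h3
    linarith only [h3]
  have hBlt : B < ϕ (2*δ) := ht₀ _ (by positivity) h2δ
  have hBle : ϕ (2*δ) ≤ B := by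
    rw [hB, le_div_iff₀ hνpos]
    exact hkey
  linarith only [hBlt, hBle]
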